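/- For d ≥ 2 and n ≥ 0, the dimension of the space H_n^d of real harmonic polynomials homogeneous of degree n in d variables equals binom(n+d−1, n) − binom(n+d−3, n−2), where the second binomial coefficient is interpreted as 0 when n = 0 or n = 1. -/

import Mathlib

set_option maxHeartbeats 1000000
set_option synthInstance.maxHeartbeats 400000

open MeasureTheory MvPolynomial Metric

/-- The polynomial Laplacian `Δ = ∂₁² + ⋯ + ∂_d²` as a linear map. -/
noncomputable def polyLaplacian (d : ℕ) : MvPolynomial (Fin d) ℝ →ₗ[ℝ] MvPolynomial (Fin d) ℝ :=
  ∑ i : Fin d, ((pderiv i).toLinearMap ∘ₗ (pderiv i).toLinearMap)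

/-- The space `H_n^d` of real harmonic polynomials in `d` variables,
homogeneous of degree `n`. -/
noncomputable def harmonicSubmodule (d n : ℕ) : Submodule ℝ (MvPolynomial (Fin d) ℝ) :=
  homogeneousSubmodule (Fin d) ℝ n ⊓ LinearMap.ker (polyLaplacian d)

variable {d : ℕ}

lemma polyLaplacian_apply (p : MvPolynomial (Fin d) ℝ) :
    polyLaplacian d p = ∑ i : Fin d, pderiv i (pderiv i p) := by
  simp [polyLaplacian]

noncomputable def rsq (d : ℕ) : MvPolynomial (Fin d) ℝ := ∑ i : Fin d, X i ^ 2

lemma isHomogeneous_rsq : (rsq d).IsHomogeneous 2 := by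
  apply MvPolynomial.IsHomogeneous.sum
  intro i _
  exact isHomogeneous_X_pow i 2

lemma pderiv_rsq (i : Fin d) : pderiv i (rsq d) = 2 * X i := by
  rw [rsq, map_sum]
  rw [Finset.sum_eq_single i]
  · rw [pderiv_pow, pderiv_X_self]; ring
  · intro j _ hj
    rw [pderiv_pow, pderiv_X_of_ne hj]; ring
  · simp

lemma degree_sub_single {s : Fin d →₀ ℕ} {i : Fin d} (h : s i ≠ 0) :
    (s - Finsupp.single i 1).degree = s.degree - 1 := by
  have hle : Finsupp.single i 1 ≤ s := by
    rw [Finsupp.single_le_iff]; omega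
  have : (s - Finsupp.single i 1) + Finsupp.single i 1 = s := tsub_add_cancel_of_le hle
  have hd : (s - Finsupp.single i 1).degree + (Finsupp.single i 1).degree = s.degree := by
    rw [← this]; simp [Finsupp.degree_eq_weight_one, map_add]
  have h1 : (Finsupp.single i 1).degree = 1 := by
    simp [Finsupp.degree_eq_weight_one, Finsupp.weight_apply]
  omega

lemma degree_of_mem_support {p : MvPolynomial (Fin d) ℝ} {n : ℕ} (hp : p.IsHomogeneous n)
    {s : Fin d →₀ ℕ} (hs : s ∈ p.support) : s.degree = n := by
  rw [Finsupp.degree_eq_weight_one]; exact hp (mem_support_iff.mp hs)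

lemma isHomogeneous_pderiv {p : MvPolynomial (Fin d) ℝ} {n : ℕ} (hp : p.IsHomogeneous n)
    (i : Fin d) : (pderiv i p).IsHomogeneous (n - 1) := by
  rw [p.as_sum, map_sum]
  apply MvPolynomial.IsHomogeneous.sum
  intro s hs
  rw [pderiv_monomial]
  by_cases h : s i = 0
  · simp [h, isHomogeneous_zero]
  · apply isHomogeneous_monomial
    rw [degree_sub_single h, degree_of_mem_support hp hs]

lemma euler {p : MvPolynomial (Fin d) ℝ} {n : ℕ} (hp : p.IsHomogeneous n) :
    ∑ i : Fin d, X i * pderiv i p = (n : ℝ) • p := by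
  conv_lhs => rw [p.as_sum]
  simp only [map_sum, pderiv_monomial, Finset.mul_sum]
  rw [Finset.sum_comm]
  conv_rhs => rw [p.as_sum, Finset.smul_sum]
  refine Finset.sum_congr rfl fun s hs => ?_
  have key : ∀ i : Fin d, X i * monomial (s - Finsupp.single i 1) (coeff s p * (s i : ℝ))
      = monomial s (coeff s p * (s i : ℝ)) := by
    intro i
    by_cases h : s i = 0
    · simp [h]
    · rw [X, monomial_mul, one_mul, add_comm,
        tsub_add_cancel_of_le (Finsupp.single_le_iff.mpr (Nat.one_le_iff_ne_zero.mpr h))]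
  rw [Finset.sum_congr rfl fun i _ => key i, ← map_sum, ← Finset.mul_sum]
  have hsum : ∑ i : Fin d, (s i : ℝ) = (n : ℝ) := by
    rw [← degree_of_mem_support hp hs, Finsupp.degree]
    rw [← Finset.sum_subset (Finset.subset_univ s.support) (by simp +contextual [Finsupp.notMem_support_iff])]
    push_cast; exact (Nat.cast_sum _ _).symm
  rw [hsum, smul_monomial, smul_eq_mul, mul_comm]

lemma lap_rsq_mul {p : MvPolynomial (Fin d) ℝ} {m : ℕ} (hp : p.IsHomogeneous m) :
    polyLaplacian d (rsq d * p)
      = C ((2 * d + 4 * m : ℕ) : ℝ) * p + rsq d * polyLaplacian d p := by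
  rw [polyLaplacian_apply, polyLaplacian_apply]
  have prsq : ∀ i : Fin d, pderiv i (rsq d) = C 2 * X i := by
    intro i; rw [pderiv_rsq]; congr 1
  have step : ∀ i : Fin d, pderiv i (pderiv i (rsq d * p)) =
      C 2 * p + C 4 * (X i * pderiv i p) + rsq d * pderiv i (pderiv i p) := by
    intro i
    have p2 : pderiv i (2 : MvPolynomial (Fin d) ℝ) = 0 := by
      rw [show (2 : MvPolynomial (Fin d) ℝ) = C 2 from (map_ofNat C 2).symm, pderiv_C]
    simp only [pderiv_mul, map_add, prsq, pderiv_X_self, pderiv_C, map_ofNat, p2]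
    ring
  rw [Finset.sum_congr rfl fun i _ => step i]
  rw [Finset.sum_add_distrib, Finset.sum_add_distrib, ← Finset.mul_sum, ← Finset.mul_sum,
    euler hp, Finset.sum_const, Finset.card_univ, Fintype.card_fin]
  simp only [map_ofNat, nsmul_eq_mul, smul_eq_C_mul, C_eq_coe_nat, ← Finset.mul_sum]
  push_cast
  ring


lemma isHomogeneous_lap {p : MvPolynomial (Fin d) ℝ} {n : ℕ} (hp : p.IsHomogeneous n) :
    (polyLaplacian d p).IsHomogeneous (n - 2) := by
  rw [polyLaplacian_apply]
  apply MvPolynomial.IsHomogeneous.sum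
  intro i _
  have := isHomogeneous_pderiv (isHomogeneous_pderiv hp i) i
  rwa [Nat.sub_sub] at this

lemma pderiv_eq_zero_of_isHomogeneous_zero {p : MvPolynomial (Fin d) ℝ}
    (hp : p.IsHomogeneous 0) (i : Fin d) : pderiv i p = 0 := by
  rw [p.as_sum, map_sum]
  apply Finset.sum_eq_zero
  intro s hs
  have h0 : s = 0 := (Finsupp.degree_eq_zero_iff s).mp (degree_of_mem_support hp hs)
  subst h0
  simp [pderiv_monomial]

lemma lap_eq_zero_of_lt_two {p : MvPolynomial (Fin d) ℝ} {m : ℕ} (hp : p.IsHomogeneous m)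
    (hm : m < 2) : polyLaplacian d p = 0 := by
  rw [polyLaplacian_apply]
  apply Finset.sum_eq_zero
  intro i _
  interval_cases m
  · rw [pderiv_eq_zero_of_isHomogeneous_zero hp i, map_zero]
  · have h0 : (pderiv i p).IsHomogeneous 0 := isHomogeneous_pderiv hp i
    exact pderiv_eq_zero_of_isHomogeneous_zero h0 i

lemma solve (hd : 1 ≤ d) : ∀ m : ℕ, ∀ a : ℝ, 0 < a → ∀ y : MvPolynomial (Fin d) ℝ,
    y.IsHomogeneous m →
    ∃ q : MvPolynomial (Fin d) ℝ, q.IsHomogeneous m ∧ C a * q + rsq d * polyLaplacian d q = y := by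
  intro m
  induction m using Nat.strong_induction_on with
  | _ m ih =>
    intro a ha y hy
    rcases lt_or_ge m 2 with hm | hm
    · refine ⟨C a⁻¹ * y, hy.C_mul _, ?_⟩
      rw [lap_eq_zero_of_lt_two (hy.C_mul _) hm, mul_zero, add_zero, ← mul_assoc, ← C_mul,
        mul_inv_cancel₀ ha.ne', C_1, one_mul]
    · set c : ℝ := ((2 * d + 4 * (m - 2) : ℕ) : ℝ) with hc_def
      have hc : 0 < a + c := by
        have : (0:ℝ) ≤ c := Nat.cast_nonneg _
        linarith
      obtain ⟨z, hz, hzeq⟩ := ih (m - 2) (by omega) (a + c) hc (polyLaplacian d y)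
        (isHomogeneous_lap hy)
      refine ⟨C a⁻¹ * (y - rsq d * z), ?_, ?_⟩
      · apply MvPolynomial.IsHomogeneous.C_mul
        apply MvPolynomial.IsHomogeneous.sub hy
        have := isHomogeneous_rsq.mul hz
        rwa [show 2 + (m - 2) = m by omega] at this
      · have hCa : (C a : MvPolynomial (Fin d) ℝ) * C a⁻¹ = 1 := by
          rw [← C_mul, mul_inv_cancel₀ ha.ne', C_1]
        have hlap : polyLaplacian d (C a⁻¹ * (y - rsq d * z))
            = C a⁻¹ * (polyLaplacian d y - (C c * z + rsq d * polyLaplacian d z)) := by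
          have h1 : polyLaplacian d (rsq d * z) = C c * z + rsq d * polyLaplacian d z :=
            lap_rsq_mul hz
          rw [show (C a⁻¹ : MvPolynomial (Fin d) ℝ) * (y - rsq d * z)
              = a⁻¹ • (y - rsq d * z) from (smul_eq_C_mul _ _).symm]
          rw [_root_.map_smul, map_sub, h1, smul_eq_C_mul]
        rw [hlap]
        have hzeq' : C (a + c) * z + rsq d * polyLaplacian d z = polyLaplacian d y := hzeq
        rw [C_add] at hzeq'
        linear_combination (-(rsq d * C a⁻¹)) * hzeq' + y * hCa

lemma lap_surj (hd : 1 ≤ d) {n : ℕ} (hn : 2 ≤ n) {y : MvPolynomial (Fin d) ℝ}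
    (hy : y.IsHomogeneous (n - 2)) :
    ∃ p : MvPolynomial (Fin d) ℝ, p.IsHomogeneous n ∧ polyLaplacian d p = y := by
  have ha : (0:ℝ) < ((2 * d + 4 * (n - 2) : ℕ) : ℝ) := by
    have : 0 < 2 * d + 4 * (n - 2) := by omega
    exact_mod_cast this
  obtain ⟨q, hq, heq⟩ := solve hd (n - 2) _ ha y hy
  refine ⟨rsq d * q, ?_, ?_⟩
  · have := isHomogeneous_rsq.mul hq
    rwa [show 2 + (n - 2) = n by omega] at this
  · rw [lap_rsq_mul hq]
    exact heq

/-- Equivalence between finsupps of degree n and multisets of size n. -/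
noncomputable def homogEquivSym (d n : ℕ) :
    {u : Fin d →₀ ℕ // u.degree = n} ≃ Sym (Fin d) n where
  toFun u := ⟨Finsupp.toMultiset u.1, by
    rw [Finsupp.card_toMultiset]
    exact u.2⟩
  invFun s := ⟨Multiset.toFinsupp s.1, by
    have := s.2
    rw [show (Multiset.toFinsupp s.1).degree = (Multiset.toFinsupp s.1).sum (fun _ => id) from rfl,
      Multiset.toFinsupp_sum_eq]
    exact s.2⟩
  left_inv u := by
    ext1
    exact Finsupp.toMultiset_toFinsupp u.1
  right_inv s := by
    ext1
    exact Multiset.toFinsupp_toMultiset s.1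

noncomputable instance homogFintype (d n : ℕ) : Fintype ↥{u : Fin d →₀ ℕ | u.degree = n} :=
  Fintype.ofEquiv _ (homogEquivSym d n).symm

lemma card_homog (d n : ℕ) :
    Fintype.card ↥{u : Fin d →₀ ℕ | u.degree = n} = (n + d - 1).choose n := by
  have h := Fintype.card_congr (α := ↥{u : Fin d →₀ ℕ | u.degree = n})
    (β := Sym (Fin d) n) (homogEquivSym d n)
  rw [h, Sym.card_sym_eq_choose, Fintype.card_fin, Nat.add_comm]

lemma finrank_homogeneousSubmodule (d n : ℕ) :
    Module.finrank ℝ (homogeneousSubmodule (Fin d) ℝ n) = (n + d - 1).choose n := by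
  rw [homogeneousSubmodule_eq_finsupp_supported]
  have b : Module.Basis ↥{u : Fin d →₀ ℕ | u.degree = n} ℝ
      (restrictSupport ℝ {u : Fin d →₀ ℕ | u.degree = n}) :=
    MvPolynomial.basisRestrictSupport ℝ _
  exact (Module.finrank_eq_card_basis b).trans (card_homog d n)

instance homogFinite (d n : ℕ) :
    Module.Finite ℝ (homogeneousSubmodule (Fin d) ℝ n) := by
  rw [homogeneousSubmodule_eq_finsupp_supported]
  exact Module.Finite.of_basis (MvPolynomial.basisRestrictSupport ℝ _ :
    Module.Basis ↥{u : Fin d →₀ ℕ | u.degree = n} ℝ _)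

/-- `dim H_n^d = C(n+d-1, n) - C(n+d-3, n-2)`, the second term being `0` for `n = 0, 1`. -/
theorem finrank_harmonicSubmodule (d n : ℕ) (hd : 2 ≤ d) :
    Module.finrank ℝ (harmonicSubmodule d n) =
      (n + d - 1).choose n - (if 2 ≤ n then (n + d - 3).choose (n - 2) else 0) := by
  by_cases hn : 2 ≤ n
  · rw [if_pos hn]
    have hmaps : ∀ x ∈ homogeneousSubmodule (Fin d) ℝ n,
        polyLaplacian d x ∈ homogeneousSubmodule (Fin d) ℝ (n - 2) :=
      fun x hx => isHomogeneous_lap hx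
    set f : (homogeneousSubmodule (Fin d) ℝ n) →ₗ[ℝ] (homogeneousSubmodule (Fin d) ℝ (n - 2)) :=
      (polyLaplacian d).restrict hmaps with hf
    have hker : LinearMap.ker f
        = (LinearMap.ker (polyLaplacian d)).comap (homogeneousSubmodule (Fin d) ℝ n).subtype :=
      LinearMap.ker_restrict hmaps
    -- harmonic ≃ ker f
    have hharm : harmonicSubmodule d n
        = homogeneousSubmodule (Fin d) ℝ n ⊓ LinearMap.ker (polyLaplacian d) := rfl
    have e : (LinearMap.ker f) ≃ₗ[ℝ] harmonicSubmodule d n := by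
      rw [hker]
      have h1 : (LinearMap.ker (polyLaplacian d)).comap
            (homogeneousSubmodule (Fin d) ℝ n).subtype
          = (harmonicSubmodule d n).comap (homogeneousSubmodule (Fin d) ℝ n).subtype := by
        rw [hharm, Submodule.comap_inf]
        simp [Submodule.comap_subtype_self]
      rw [h1]
      exact Submodule.comapSubtypeEquivOfLe inf_le_left
    -- surjectivity
    have hsurj : LinearMap.range f = ⊤ := by
      rw [LinearMap.range_eq_top]
      rintro ⟨y, hy⟩
      obtain ⟨p, hp, hlp⟩ := lap_surj (by omega) hn hy
      refine ⟨⟨p, hp⟩, Subtype.ext ?_⟩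
      rw [hf]
      exact (LinearMap.restrict_apply hmaps ⟨p, hp⟩).symm ▸ hlp
    have hrn := LinearMap.finrank_range_add_finrank_ker f
    rw [hsurj, finrank_top] at hrn
    have hkerdim : Module.finrank ℝ (LinearMap.ker f)
        = Module.finrank ℝ (harmonicSubmodule d n) := e.finrank_eq
    have h2 := finrank_homogeneousSubmodule d n
    have h3 := finrank_homogeneousSubmodule d (n - 2)
    have harith : n - 2 + d - 1 = n + d - 3 := by omega
    rw [harith] at h3
    omega
  · rw [if_neg hn]
    have heq : harmonicSubmodule d n = homogeneousSubmodule (Fin d) ℝ n := by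
      rw [harmonicSubmodule, inf_eq_left]
      intro x hx
      simp only [LinearMap.mem_ker]
      exact lap_eq_zero_of_lt_two hx (by omega)
    rw [heq, finrank_homogeneousSubmodule]
    omega
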